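/- arXiv:2308.00549 — 2 statements merged into one kernel-verified Lean document; each statement's English description precedes it below -/
import Mathlib

section
/- Let U₁,…,U_d be independent Uniform(0,1) random variables, α₁,…,α_d > 0, and V_i = U_i^{1/α_i}. Then P(V₁ ≤ V₂ ≤ ⋯ ≤ V_d) = ∏_{i=1}^d α_i/(α₁ + ⋯ + α_i). -/
open MeasureTheory Set Finset
open scoped ProbabilityTheory


lemma Iic_castSucc' {n : ℕ} (i : Fin n) :
    Finset.Iic (Fin.castSucc i) = (Finset.Iic i).map Fin.castSuccEmb := by
  ext j
  simp only [Finset.mem_Iic, Finset.mem_map]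
  constructor
  · intro hj
    have hj' : (j : ℕ) < n := lt_of_le_of_lt hj i.isLt
    exact ⟨⟨j, hj'⟩, hj, rfl⟩
  · rintro ⟨k, hk, rfl⟩
    exact Fin.castSucc_le_castSucc_iff.mpr hk

lemma sum_Iic_castSucc' {n : ℕ} (f : Fin (n+1) → ℝ) (i : Fin n) :
    ∑ j ∈ Finset.Iic (Fin.castSucc i), f j = ∑ j ∈ Finset.Iic i, f (Fin.castSucc j) := by
  rw [Iic_castSucc', Finset.sum_map]; rfl

lemma Iic_last' {n : ℕ} : Finset.Iic (Fin.last n) = (Finset.univ : Finset (Fin (n+1))) := by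
  ext j; simp [Fin.le_last]

lemma measS {n : ℕ} (β : Fin n → ℝ) (hβ : ∀ i, 0 < β i) (t : ℝ) :
    MeasurableSet {u : Fin n → ℝ |
      (∀ i j : Fin n, i ≤ j → u i ^ (1 / β i) ≤ u j ^ (1 / β j)) ∧ ∀ i, u i ^ (1 / β i) ≤ t} := by
  have hmeas : ∀ i : Fin n, Measurable fun u : Fin n → ℝ => u i ^ (1 / β i) := fun i =>
    (Real.continuous_rpow_const (le_of_lt (one_div_pos.mpr (hβ i)))).measurable.comp
      (measurable_pi_apply i)
  apply MeasurableSet.inter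
  · show MeasurableSet {u : Fin n → ℝ | ∀ i j : Fin n, i ≤ j → u i ^ (1 / β i) ≤ u j ^ (1 / β j)}
    rw [Set.setOf_forall]
    refine MeasurableSet.iInter fun i => ?_
    rw [Set.setOf_forall]
    refine MeasurableSet.iInter fun j => ?_
    rcases le_or_gt i j with h | h
    · simpa [h] using measurableSet_le (hmeas i) (hmeas j)
    · simp [not_le.mpr h]
  · show MeasurableSet {u : Fin n → ℝ | ∀ i, u i ^ (1 / β i) ≤ t}
    rw [Set.setOf_forall]
    exact MeasurableSet.iInter fun i => measurableSet_le (hmeas i) measurable_const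

lemma key (n : ℕ) (β : Fin n → ℝ) (hβ : ∀ i, 0 < β i) (t : ℝ) (ht : t ∈ Set.Ioc (0:ℝ) 1) :
    (Measure.pi fun _ : Fin n => volume.restrict (Ioc (0:ℝ) 1))
      {u | (∀ i j : Fin n, i ≤ j → u i ^ (1 / β i) ≤ u j ^ (1 / β j)) ∧ ∀ i, u i ^ (1 / β i) ≤ t}
    = ENNReal.ofReal (t ^ (∑ i, β i) * ∏ i, β i / ∑ j ∈ Finset.Iic i, β j) := by
  induction n generalizing t with
  | zero =>
      rw [Measure.pi_of_empty]
      have : {u : Fin 0 → ℝ |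
          (∀ i j : Fin 0, i ≤ j → u i ^ (1 / β i) ≤ u j ^ (1 / β j)) ∧
            ∀ i, u i ^ (1 / β i) ≤ t} = Set.univ := by
        ext u; simp [Fin.forall_fin_zero_pi]
      rw [this]
      simp [Real.rpow_zero]
  | succ n ih =>
      obtain ⟨ht0, ht1⟩ := ht
      set μ0 : Measure ℝ := volume.restrict (Ioc (0:ℝ) 1) with hμ0
      have hβl0 : 0 < β (Fin.last n) := hβ _
      set βl : ℝ := β (Fin.last n) with hβl
      set β' : Fin n → ℝ := fun i => β (Fin.castSucc i) with hβ'def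
      have hβ'0 : ∀ i, 0 < β' i := fun i => hβ _
      set s' : ℝ := ∑ i, β' i with hs'
      have hs'0 : 0 ≤ s' := Finset.sum_nonneg fun i _ => (hβ'0 i).le
      set C : ℝ := ∏ i, β' i / ∑ j ∈ Finset.Iic i, β' j with hC
      have hC0 : 0 ≤ C := Finset.prod_nonneg fun i _ =>
        div_nonneg (hβ'0 i).le (Finset.sum_nonneg fun j _ => (hβ'0 j).le)
      set c : ℝ := t ^ βl with hc
      have hc0 : 0 < c := Real.rpow_pos_of_pos ht0 _
      have hc1 : c ≤ 1 := Real.rpow_le_one ht0.le ht1 hβl0.le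
      set p : ℝ := βl⁻¹ * s' with hp
      have hp0 : 0 ≤ p := mul_nonneg (inv_nonneg.mpr hβl0.le) hs'0
      set S : Set (Fin (n+1) → ℝ) := {u | (∀ i j, i ≤ j → u i ^ (1/β i) ≤ u j ^ (1/β j)) ∧
        ∀ i, u i ^ (1/β i) ≤ t} with hSdef
      have hSm : MeasurableSet S := measS β hβ t
      set e := MeasurableEquiv.piFinSuccAbove (fun _ : Fin (n+1) => ℝ) (Fin.last n) with he
      have hmp := (measurePreserving_piFinSuccAbove
        (fun _ : Fin (n+1) => μ0) (Fin.last n)).symm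
      have h1 : (Measure.pi fun _ : Fin (n+1) => μ0) S
          = (μ0.prod (Measure.pi fun _ : Fin n => μ0)) (e.symm ⁻¹' S) :=
        (hmp.measure_preimage hSm.nullMeasurableSet).symm
      show (Measure.pi fun _ : Fin (n+1) => μ0) S = _
      rw [h1, Measure.prod_apply (e.symm.measurable hSm)]
      have hsec : ∀ x ∈ Ioc (0:ℝ) 1,
          (Measure.pi fun _ : Fin n => μ0) (Prod.mk x ⁻¹' (e.symm ⁻¹' S))
            = (Ioc 0 c).indicator (fun x => ENNReal.ofReal (x ^ p * C)) x := by
        intro x hx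
        obtain ⟨hx0, hx1⟩ := hx
        have hes : ∀ v : Fin n → ℝ, e.symm (x, v) = Fin.snoc v x := by
          intro v
          show (Fin.insertNthEquiv (fun _ => ℝ) (Fin.last n)) (x, v) = Fin.snoc v x
          exact Fin.insertNth_last' x v
        have hsnoc : ∀ v : Fin n → ℝ, v ∈ Prod.mk x ⁻¹' (e.symm ⁻¹' S) ↔ Fin.snoc v x ∈ S := by
          intro v
          rw [Set.mem_preimage, Set.mem_preimage, hes v]
        by_cases hxc : x ≤ c
        · have hxt : x ^ (1/βl) ≤ t := by
            rw [one_div]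
            exact (Real.rpow_inv_le_iff_of_pos hx0.le ht0.le hβl0).mpr hxc
          have ht' : x ^ (1/βl) ∈ Set.Ioc (0:ℝ) 1 :=
            ⟨Real.rpow_pos_of_pos hx0 _, Real.rpow_le_one hx0.le hx1 (by positivity)⟩
          have hset : (Prod.mk x ⁻¹' (e.symm ⁻¹' S)) =
              {v : Fin n → ℝ | (∀ i j : Fin n, i ≤ j →
                  v i ^ (1/β' i) ≤ v j ^ (1/β' j)) ∧ ∀ i, v i ^ (1/β' i) ≤ x ^ (1/βl)} := by
            ext v
            rw [hsnoc v]
            constructor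
            · rintro ⟨h1', h2'⟩
              constructor
              · intro i j hij
                have := h1' i.castSucc j.castSucc (Fin.castSucc_le_castSucc_iff.mpr hij)
                simpa [Fin.snoc_castSucc] using this
              · intro i
                have := h1' i.castSucc (Fin.last n) (Fin.le_last _)
                simpa [Fin.snoc_castSucc, Fin.snoc_last] using this
            · rintro ⟨h1', h2'⟩
              constructor
              · intro i j hij
                rcases Fin.eq_castSucc_or_eq_last j with ⟨k, rfl⟩ | rfl
                · rcases Fin.eq_castSucc_or_eq_last i with ⟨m, rfl⟩ | rfl
                  · have hmk : m ≤ k := Fin.castSucc_le_castSucc_iff.mp hij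
                    simpa [Fin.snoc_castSucc] using h1' m k hmk
                  · exact absurd (le_antisymm (Fin.le_last _) hij).symm
                      (Fin.castSucc_lt_last k).ne'
                · rcases Fin.eq_castSucc_or_eq_last i with ⟨m, rfl⟩ | rfl
                  · simpa [Fin.snoc_castSucc, Fin.snoc_last] using h2' m
                  · exact le_refl _
              · intro i
                refine Fin.lastCases ?_ ?_ i
                · simpa [Fin.snoc_last] using hxt
                · intro k
                  simpa [Fin.snoc_castSucc] using le_trans (h2' k) hxt
          rw [hset, ih β' hβ'0 _ ht']
          rw [Set.indicator_of_mem (by exact ⟨hx0, hxc⟩)]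
          congr 1
          rw [hp, Real.rpow_mul hx0.le, one_div]
        · rw [Set.indicator_of_notMem (fun h => hxc h.2)]
          have hset : (Prod.mk x ⁻¹' (e.symm ⁻¹' S)) = (∅ : Set (Fin n → ℝ)) := by
            ext v
            rw [hsnoc v]
            simp only [Set.mem_empty_iff_false, iff_false]
            intro hv
            have := hv.2 (Fin.last n)
            rw [Fin.snoc_last] at this
            exact hxc ((Real.rpow_inv_le_iff_of_pos hx0.le ht0.le hβl0).mp
              (by rwa [one_div] at this))
          rw [hset]
          simp
      rw [hμ0] at *
      rw [setLIntegral_congr_fun measurableSet_Ioc hsec]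
      rw [lintegral_indicator measurableSet_Ioc, Measure.restrict_restrict measurableSet_Ioc,
        Set.Ioc_inter_Ioc, sup_idem, min_eq_left hc1]
      have hint : IntegrableOn (fun x : ℝ => x ^ p * C) (Ioc 0 c) volume := by
        rw [← intervalIntegrable_iff_integrableOn_Ioc_of_le hc0.le]
        exact (intervalIntegral.intervalIntegrable_rpow' (by linarith)).mul_const C
      have hnn : 0 ≤ᵐ[volume.restrict (Ioc (0:ℝ) c)] fun x : ℝ => x ^ p * C := by
        filter_upwards [ae_restrict_mem measurableSet_Ioc] with x hx
        exact mul_nonneg (Real.rpow_nonneg hx.1.le _) hC0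
      rw [← ofReal_integral_eq_lintegral_ofReal hint hnn]
      rw [← intervalIntegral.integral_of_le hc0.le, intervalIntegral.integral_mul_const,
        integral_rpow (Or.inl (by linarith))]
      congr 1
      have hzero : (0:ℝ) ^ (p + 1) = 0 := Real.zero_rpow (by positivity)
      rw [hzero, sub_zero]
      have hcp : c ^ (p + 1) = t ^ (s' + βl) := by
        rw [hc, ← Real.rpow_mul ht0.le]
        congr 1
        rw [hp]
        field_simp
      have hsum : ∑ i : Fin (n+1), β i = s' + βl := by
        rw [Fin.sum_univ_castSucc]
      have hprod : ∏ i : Fin (n+1), β i / ∑ j ∈ Finset.Iic i, β j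
          = C * (βl / (s' + βl)) := by
        rw [Fin.prod_univ_castSucc]
        congr 1
        · exact Finset.prod_congr rfl fun i _ => by rw [sum_Iic_castSucc']
        · rw [Iic_last', ← hsum]
      rw [hcp, hsum, hprod]
      have hpos : 0 < s' + βl := by linarith
      have hp1 : p + 1 = (s' + βl) / βl := by
        rw [hp]; field_simp
      rw [hp1]
      field_simp


/-- Efraimidis–Spirakis order identity: for independent `Uᵢ ~ Uniform(0,1)` and weights
`αᵢ > 0`, the keys `Vᵢ = Uᵢ^{1/αᵢ}` satisfy
`P(V₁ ≤ V₂ ≤ ⋯ ≤ V_d) = ∏ᵢ αᵢ / (α₁ + ⋯ + αᵢ)`. -/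
theorem wrs_order_probability
    {Ω : Type*} [MeasureSpace Ω] [IsProbabilityMeasure (ℙ : Measure Ω)]
    {d : ℕ} (U : Fin d → Ω → ℝ) (hm : ∀ i, Measurable (U i))
    (hInd : ProbabilityTheory.iIndepFun U)
    (hUnif : ∀ i, (ℙ : Measure Ω).map (U i) = volume.restrict (Ioo (0 : ℝ) 1))
    (α : Fin d → ℝ) (hα : ∀ i, 0 < α i) :
    ℙ {ω | ∀ i j : Fin d, i ≤ j → U i ω ^ (1 / α i) ≤ U j ω ^ (1 / α j)}
      = ENNReal.ofReal (∏ i, α i / ∑ j ∈ Finset.Iic i, α j) := by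
  classical
  set μ0 : Measure ℝ := volume.restrict (Ioc (0:ℝ) 1) with hμ0
  have hres : volume.restrict (Ioo (0:ℝ) 1) = μ0 :=
    Measure.restrict_congr_set Ioo_ae_eq_Ioc
  haveI : IsProbabilityMeasure μ0 := ⟨by simp [hμ0]⟩
  have hg : Measurable (fun ω => fun i => U i ω) := measurable_pi_lambda _ hm
  have hmap : (ℙ : Measure Ω).map (fun ω i => U i ω)
      = Measure.pi (fun _ : Fin d => μ0) := by
    haveI : SigmaFinite μ0 := inferInstance
    refine (Measure.pi_eq (μ := fun _ : Fin d => μ0) fun s hs => ?_).symm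
    rw [Measure.map_apply hg (MeasurableSet.univ_pi hs)]
    have hpre : (fun ω i => U i ω) ⁻¹' (Set.pi Set.univ s)
        = ⋂ i ∈ Finset.univ, U i ⁻¹' s i := by
      ext ω; simp [Set.mem_pi]
    rw [hpre, hInd.measure_inter_preimage_eq_mul Finset.univ (fun i _ => hs i)]
    refine Finset.prod_congr rfl fun i _ => ?_
    rw [← Measure.map_apply (hm i) (hs i), hUnif i, hres]
  set S₁ : Set (Fin d → ℝ) :=
    {u | ∀ i j : Fin d, i ≤ j → u i ^ (1 / α i) ≤ u j ^ (1 / α j)} with hS₁def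
  have hmeas : ∀ i : Fin d, Measurable fun u : Fin d → ℝ => u i ^ (1 / α i) := fun i =>
    (Real.continuous_rpow_const (le_of_lt (one_div_pos.mpr (hα i)))).measurable.comp
      (measurable_pi_apply i)
  have hS₁m : MeasurableSet S₁ := by
    show MeasurableSet {u : Fin d → ℝ | ∀ i j : Fin d, i ≤ j →
      u i ^ (1 / α i) ≤ u j ^ (1 / α j)}
    rw [Set.setOf_forall]
    refine MeasurableSet.iInter fun i => ?_
    rw [Set.setOf_forall]
    refine MeasurableSet.iInter fun j => ?_
    rcases le_or_gt i j with h | h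
    · simpa [h] using measurableSet_le (hmeas i) (hmeas j)
    · simp [not_le.mpr h]
  have hev : {ω | ∀ i j : Fin d, i ≤ j → U i ω ^ (1 / α i) ≤ U j ω ^ (1 / α j)}
      = (fun ω i => U i ω) ⁻¹' S₁ := rfl
  rw [hev, ← Measure.map_apply hg hS₁m, hmap]
  set S : Set (Fin d → ℝ) :=
    {u | (∀ i j : Fin d, i ≤ j → u i ^ (1 / α i) ≤ u j ^ (1 / α j)) ∧
      ∀ i, u i ^ (1 / α i) ≤ 1} with hSdef
  have hbox : (Measure.pi fun _ : Fin d => μ0)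
      (Set.pi Set.univ fun _ : Fin d => Ioc (0:ℝ) 1)ᶜ = 0 := by
    rw [measure_compl (MeasurableSet.univ_pi fun _ => measurableSet_Ioc)
      (measure_ne_top _ _), Measure.pi_pi]
    simp [hμ0]
  have hae : S₁ =ᵐ[Measure.pi fun _ : Fin d => μ0] S := by
    rw [MeasureTheory.ae_eq_set]
    constructor
    · refine measure_mono_null (fun u hu => ?_) hbox
      obtain ⟨hu1, hu2⟩ := hu
      intro hb
      rw [Set.mem_pi] at hb
      exact hu2 ⟨hu1, fun i => Real.rpow_le_one (hb i trivial).1.le (hb i trivial).2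
        (le_of_lt (one_div_pos.mpr (hα i)))⟩
    · have : S \ S₁ = ∅ := Set.diff_eq_empty.mpr fun u hu => hu.1
      rw [this]; exact measure_empty
  rw [measure_congr hae, key d α hα 1 ⟨one_pos, le_refl 1⟩]
  rw [Real.one_rpow, one_mul]
end

section
/- Let U₁,…,U_d be independent Uniform(0,1) and α_i > 0. Then P(argmax_i U_i^{1/α_i} = j) = α_j / (α₁ + ⋯ + α_d) for each j, where the argmax is almost surely unique. -/
open MeasureTheory Set
open scoped ProbabilityTheory

namespace WRSaux

lemma uniform_prob : IsProbabilityMeasure (volume.restrict (Ioo (0:ℝ) 1)) :=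
  ⟨by rw [Measure.restrict_apply_univ, Real.volume_Ioo]; norm_num⟩

lemma slice_lt {β γ t : ℝ} (hβ : 0 < β) (hγ : 0 < γ) (ht0 : 0 < t) (ht1 : t < 1) :
    volume.restrict (Ioo (0:ℝ) 1) {s : ℝ | s ^ (1/β) < t ^ (1/γ)}
      = ENNReal.ofReal (t ^ (β/γ)) := by
  rw [Measure.restrict_apply' measurableSet_Ioo]
  have h1 : {s : ℝ | s ^ (1/β) < t ^ (1/γ)} ∩ Ioo 0 1 = Ioo 0 (t ^ (β/γ)) := by
    ext s
    simp only [mem_inter_iff, mem_setOf_eq, mem_Ioo]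
    constructor
    · rintro ⟨hlt, hs0, _⟩
      refine ⟨hs0, ?_⟩
      have h2 := Real.rpow_lt_rpow (Real.rpow_nonneg hs0.le _) hlt hβ
      have e1 : (1/β) * β = 1 := by field_simp
      have e2 : (1/γ) * β = β/γ := by field_simp
      rwa [← Real.rpow_mul hs0.le, ← Real.rpow_mul ht0.le, e1, e2, Real.rpow_one] at h2
    · rintro ⟨hs0, hst⟩
      have htc1 : t ^ (β/γ) < 1 := Real.rpow_lt_one ht0.le ht1 (by positivity)
      refine ⟨?_, hs0, hst.trans htc1⟩
      have h2 := Real.rpow_lt_rpow hs0.le hst (show (0:ℝ) < 1/β by positivity)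
      have e1 : (β/γ) * (1/β) = 1/γ := by field_simp
      rwa [← Real.rpow_mul ht0.le, e1] at h2
  rw [h1, Real.volume_Ioo, sub_zero]

lemma slice_eq {β : ℝ} (hβ : 0 < β) (c : ℝ) :
    volume.restrict (Ioo (0:ℝ) 1) {s : ℝ | s ^ (1/β) = c} = 0 := by
  rw [Measure.restrict_apply' measurableSet_Ioo]
  refine measure_mono_null ?_ (measure_singleton (c ^ β))
  rintro s ⟨hs, hs0, _⟩
  have h2 : (s ^ (1/β)) ^ β = s := by
    rw [← Real.rpow_mul hs0.le, one_div, inv_mul_cancel₀ hβ.ne', Real.rpow_one]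
  simp only [mem_singleton_iff]
  rw [← h2, hs]

lemma pi_lt_measure {n : ℕ} (α : Fin (n+1) → ℝ) (hα : ∀ i, 0 < α i) (j : Fin (n+1)) :
    Measure.pi (fun _ : Fin (n+1) => volume.restrict (Ioo (0:ℝ) 1))
      {x | ∀ i, i ≠ j → x i ^ (1/α i) < x j ^ (1/α j)}
      = ENNReal.ofReal (α j / ∑ i, α i) := by
  haveI := uniform_prob
  set μ0 : Measure ℝ := volume.restrict (Ioo (0:ℝ) 1) with hμ0
  have hS : 0 < ∑ i, α i := Finset.sum_pos (fun i _ => hα i) Finset.univ_nonempty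
  set c : ℝ := (∑ k, α (j.succAbove k)) / α j with hc
  have hsum : ∑ i, α i = α j + ∑ k, α (j.succAbove k) := Fin.sum_univ_succAbove α j
  have hc0 : 0 ≤ c := div_nonneg (Finset.sum_nonneg fun k _ => (hα _).le) (hα j).le
  set B : Set (ℝ × (Fin n → ℝ)) :=
    {p | ∀ k, p.2 k ^ (1/α (j.succAbove k)) < p.1 ^ (1/α j)} with hB
  have hBm : MeasurableSet B := by
    have h1 : B = ⋂ k, {p : ℝ × (Fin n → ℝ) | p.2 k ^ (1/α (j.succAbove k)) < p.1 ^ (1/α j)} := by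
      ext p; simp [hB]
    rw [h1]
    exact MeasurableSet.iInter fun k => measurableSet_lt (by fun_prop) (by fun_prop)
  have hmp := measurePreserving_piFinSuccAbove (fun _ : Fin (n+1) => μ0) j
  have hpre : (MeasurableEquiv.piFinSuccAbove (fun _ : Fin (n+1) => ℝ) j) ⁻¹' B
      = {x | ∀ i, i ≠ j → x i ^ (1/α i) < x j ^ (1/α j)} := by
    ext x
    simp only [mem_preimage, MeasurableEquiv.piFinSuccAbove_apply, hB, mem_setOf_eq,
      Fin.removeNth, Fin.insertNthEquiv, Equiv.coe_fn_symm_mk]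
    constructor
    · intro h i hij
      obtain ⟨k, rfl⟩ := Fin.exists_succAbove_eq hij
      exact h k
    · intro h k
      exact h _ (Fin.succAbove_ne j k)
  have step1 : Measure.pi (fun _ : Fin (n+1) => μ0)
      {x | ∀ i, i ≠ j → x i ^ (1/α i) < x j ^ (1/α j)}
      = (μ0.prod (Measure.pi fun _ : Fin n => μ0)) B := by
    rw [← hpre]; exact hmp.measure_preimage hBm.nullMeasurableSet
  rw [step1, Measure.prod_apply hBm]
  have hslice : ∀ t ∈ Ioo (0:ℝ) 1, (Measure.pi fun _ : Fin n => μ0) (Prod.mk t ⁻¹' B)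
      = ENNReal.ofReal (t ^ c) := by
    intro t ht
    have h1 : Prod.mk t ⁻¹' B
        = Set.pi univ (fun k => {s : ℝ | s ^ (1/α (j.succAbove k)) < t ^ (1/α j)}) := by
      ext y; simp [hB, Set.mem_pi]
    rw [h1, Measure.pi_pi]
    have h2 : ∀ k : Fin n, μ0 {s : ℝ | s ^ (1/α (j.succAbove k)) < t ^ (1/α j)}
        = ENNReal.ofReal (t ^ (α (j.succAbove k) / α j)) := fun k =>
      slice_lt (hα _) (hα j) ht.1 ht.2
    simp_rw [h2]
    rw [← ENNReal.ofReal_prod_of_nonneg (fun k _ => Real.rpow_nonneg ht.1.le _)]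
    congr 1
    rw [← Real.rpow_sum_of_pos ht.1, hc, Finset.sum_div]
  have step2 : ∫⁻ t, (Measure.pi fun _ : Fin n => μ0) (Prod.mk t ⁻¹' B) ∂μ0
      = ∫⁻ t in Ioo (0:ℝ) 1, ENNReal.ofReal (t ^ c) := by
    rw [hμ0]
    exact setLIntegral_congr_fun measurableSet_Ioo hslice
  rw [step2]
  have hc1 : (0:ℝ) < c + 1 := by linarith
  have hint : IntegrableOn (fun t : ℝ => t ^ c) (Ioo 0 1) := by
    have h := intervalIntegral.intervalIntegrable_rpow' (a := (0:ℝ)) (b := 1)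
      (show (-1:ℝ) < c by linarith)
    rw [intervalIntegrable_iff, uIoc_of_le zero_le_one] at h
    exact h.mono_set Ioo_subset_Ioc_self
  rw [← MeasureTheory.ofReal_integral_eq_lintegral_ofReal hint
    (by filter_upwards [self_mem_ae_restrict measurableSet_Ioo] with t ht using
      Real.rpow_nonneg ht.1.le c)]
  congr 1
  rw [← integral_Ioc_eq_integral_Ioo, ← intervalIntegral.integral_of_le zero_le_one,
    integral_rpow (Or.inl (show (-1:ℝ) < c by linarith)), Real.one_rpow,
    Real.zero_rpow hc1.ne', sub_zero]
  have h3 : c + 1 = (∑ i, α i) / α j := by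
    rw [hc, hsum, add_div, div_self (hα j).ne']
    ring
  rw [h3, one_div_div]

lemma pi_eq_measure_zero {n : ℕ} (α : Fin (n+1) → ℝ) (hα : ∀ i, 0 < α i) {i j : Fin (n+1)}
    (hij : i ≠ j) :
    Measure.pi (fun _ : Fin (n+1) => volume.restrict (Ioo (0:ℝ) 1))
      {x | x i ^ (1/α i) = x j ^ (1/α j)} = 0 := by
  haveI := uniform_prob
  set μ0 : Measure ℝ := volume.restrict (Ioo (0:ℝ) 1) with hμ0
  obtain ⟨k₀, hk₀⟩ := Fin.exists_succAbove_eq (Ne.symm hij)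
  set B : Set (ℝ × (Fin n → ℝ)) :=
    {p | p.1 ^ (1/α i) = p.2 k₀ ^ (1/α (i.succAbove k₀))} with hB
  have hBm : MeasurableSet B := measurableSet_eq_fun (by fun_prop) (by fun_prop)
  have hmp := measurePreserving_piFinSuccAbove (fun _ : Fin (n+1) => μ0) i
  have hpre : (MeasurableEquiv.piFinSuccAbove (fun _ : Fin (n+1) => ℝ) i) ⁻¹' B
      = {x | x i ^ (1/α i) = x j ^ (1/α j)} := by
    ext x
    simp only [mem_preimage, MeasurableEquiv.piFinSuccAbove_apply, hB, mem_setOf_eq,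
      Fin.removeNth, Fin.insertNthEquiv, Equiv.coe_fn_symm_mk, hk₀]
  rw [← hpre, hmp.measure_preimage hBm.nullMeasurableSet, Measure.prod_apply_symm hBm]
  have h1 : ∀ y : Fin n → ℝ, μ0 ((fun t : ℝ => (t, y)) ⁻¹' B) = 0 := by
    intro y
    have h2 : ((fun t : ℝ => (t, y)) ⁻¹' B)
        = {t : ℝ | t ^ (1/α i) = y k₀ ^ (1/α (i.succAbove k₀))} := rfl
    rw [h2, hμ0]
    exact slice_eq (hα i) _
  simp only [h1, lintegral_zero]

lemma map_pi {Ω : Type*} [MeasureSpace Ω] [IsProbabilityMeasure (ℙ : Measure Ω)] {d : ℕ}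
    (U : Fin d → Ω → ℝ) (hm : ∀ i, Measurable (U i))
    (hInd : ProbabilityTheory.iIndepFun U)
    (hUnif : ∀ i, (ℙ : Measure Ω).map (U i) = volume.restrict (Ioo (0:ℝ) 1)) :
    (ℙ : Measure Ω).map (fun ω (i : Fin d) => U i ω)
      = Measure.pi (fun _ : Fin d => volume.restrict (Ioo (0:ℝ) 1)) := by
  haveI := uniform_prob
  have hJ : Measurable fun ω (i : Fin d) => U i ω := measurable_pi_iff.2 hm
  refine (Measure.pi_eq fun s hs => ?_).symm
  rw [Measure.map_apply hJ (MeasurableSet.univ_pi hs)]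
  have h1 : (fun ω (i : Fin d) => U i ω) ⁻¹' (univ.pi s) = ⋂ i ∈ Finset.univ, U i ⁻¹' s i := by
    ext ω; simp [Set.mem_pi]
  rw [h1, hInd.measure_inter_preimage_eq_mul Finset.univ (fun i _ => hs i)]
  exact Finset.prod_congr rfl fun k _ => by rw [← hUnif k, Measure.map_apply (hm k) (hs k)]

end WRSaux

/-- For independent `Uᵢ ~ Uniform(0,1)` and weights `αᵢ > 0`, the argmax of the keys
`Vᵢ = Uᵢ^{1/αᵢ}` is almost surely unique, and equals `j` with probability
`αⱼ / (α₁ + ⋯ + α_d)`. -/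
theorem wrs_argmax_probability
    {Ω : Type*} [MeasureSpace Ω] [IsProbabilityMeasure (ℙ : Measure Ω)]
    {d : ℕ} (U : Fin d → Ω → ℝ) (hm : ∀ i, Measurable (U i))
    (hInd : ProbabilityTheory.iIndepFun U)
    (hUnif : ∀ i, (ℙ : Measure Ω).map (U i) = volume.restrict (Ioo (0 : ℝ) 1))
    (α : Fin d → ℝ) (hα : ∀ i, 0 < α i) :
    (ℙ {ω | ∃ i j : Fin d, i ≠ j ∧ U i ω ^ (1 / α i) = U j ω ^ (1 / α j)} = 0) ∧
    ∀ j : Fin d,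
      ℙ {ω | ∀ i : Fin d, i ≠ j → U i ω ^ (1 / α i) < U j ω ^ (1 / α j)}
        = ENNReal.ofReal (α j / ∑ i, α i) := by
  constructor
  · have h0 : {ω | ∃ i j : Fin d, i ≠ j ∧ U i ω ^ (1 / α i) = U j ω ^ (1 / α j)}
        = ⋃ i, ⋃ j, {ω | i ≠ j ∧ U i ω ^ (1 / α i) = U j ω ^ (1 / α j)} := by
      ext ω; simp
    rw [h0]
    refine measure_iUnion_null fun i => measure_iUnion_null fun j => ?_
    by_cases hij : i = j
    · subst hij
      have : {ω | i ≠ i ∧ U i ω ^ (1 / α i) = U i ω ^ (1 / α i)} = (∅ : Set Ω) := by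
        ext ω; simp
      rw [this, measure_empty]
    · obtain ⟨n, rfl⟩ : ∃ n, d = n + 1 := ⟨d - 1, (Nat.succ_pred_eq_of_pos i.pos).symm⟩
      have hmap := WRSaux.map_pi U hm hInd hUnif
      have hJ : Measurable fun ω (k : Fin (n+1)) => U k ω := measurable_pi_iff.2 hm
      have hA : MeasurableSet {x : Fin (n+1) → ℝ | x i ^ (1/α i) = x j ^ (1/α j)} :=
        measurableSet_eq_fun (by fun_prop) (by fun_prop)
      have hE : {ω | i ≠ j ∧ U i ω ^ (1 / α i) = U j ω ^ (1 / α j)}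
          = (fun ω (k : Fin (n+1)) => U k ω) ⁻¹'
              {x : Fin (n+1) → ℝ | x i ^ (1/α i) = x j ^ (1/α j)} := by
        ext ω; simp [hij]
      rw [hE, ← Measure.map_apply hJ hA, hmap, WRSaux.pi_eq_measure_zero α hα hij]
  · intro j
    obtain ⟨n, rfl⟩ : ∃ n, d = n + 1 := ⟨d - 1, (Nat.succ_pred_eq_of_pos j.pos).symm⟩
    have hmap := WRSaux.map_pi U hm hInd hUnif
    have hJ : Measurable fun ω (k : Fin (n+1)) => U k ω := measurable_pi_iff.2 hm
    have hA : MeasurableSet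
        {x : Fin (n+1) → ℝ | ∀ i, i ≠ j → x i ^ (1/α i) < x j ^ (1/α j)} := by
      have h1 : {x : Fin (n+1) → ℝ | ∀ i, i ≠ j → x i ^ (1/α i) < x j ^ (1/α j)}
          = ⋂ i, {x : Fin (n+1) → ℝ | i ≠ j → x i ^ (1/α i) < x j ^ (1/α j)} := by
        ext x; simp
      rw [h1]
      refine MeasurableSet.iInter fun i => ?_
      by_cases hij : i = j
      · subst hij
        have : {x : Fin (n+1) → ℝ | i ≠ i → x i ^ (1/α i) < x i ^ (1/α i)} = univ := by
          ext x; simp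
        rw [this]; exact MeasurableSet.univ
      · have : {x : Fin (n+1) → ℝ | i ≠ j → x i ^ (1/α i) < x j ^ (1/α j)}
            = {x : Fin (n+1) → ℝ | x i ^ (1/α i) < x j ^ (1/α j)} := by
          ext x; simp [hij]
        rw [this]
        exact measurableSet_lt (by fun_prop) (by fun_prop)
    have hE : {ω | ∀ i : Fin (n+1), i ≠ j → U i ω ^ (1 / α i) < U j ω ^ (1 / α j)}
        = (fun ω (k : Fin (n+1)) => U k ω) ⁻¹'
            {x : Fin (n+1) → ℝ | ∀ i, i ≠ j → x i ^ (1/α i) < x j ^ (1/α j)} := rfl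
    rw [hE, ← Measure.map_apply hJ hA, hmap, WRSaux.pi_lt_measure α hα j]
end
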